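/- arXiv:2009.10833 — 2 statements merged into one kernel-verified Lean document; each statement's English description precedes it below -/
import Mathlib

section
/- Suppose a real polynomial $f(x) = \sum_{\alpha} c_{\alpha} x^{\alpha}$ has a zero of order $n > 0$ at $x_0$. Then for any polynomial $p \in \mathbb{R}[x]$ of degree $d < n$, we have $\sum_{\alpha} c_{\alpha} p(\alpha) x_0^{\alpha} = 0$. -/
open Polynomial

private lemma coeff_X_mul_deriv (g : Polynomial ℝ) (α : ℕ) :
    (X * derivative g).coeff α = (α : ℝ) * g.coeff α := by
  cases α with
  | zero => simp
  | succ α =>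
    rw [coeff_X_mul, coeff_derivative]
    push_cast
    ring

private lemma dvd_X_mul_deriv (x0 : ℝ) (m : ℕ) (g : Polynomial ℝ)
    (h : (X - C x0) ^ (m + 1) ∣ g) : (X - C x0) ^ m ∣ X * derivative g := by
  obtain ⟨h1, rfl⟩ := h
  rw [derivative_mul, derivative_pow]
  simp only [derivative_sub, derivative_X, derivative_C, sub_zero, mul_one,
    Nat.add_sub_cancel]
  refine Dvd.dvd.mul_left (dvd_add ?_ ?_) X
  · exact Dvd.dvd.mul_right (Dvd.dvd.mul_left dvd_rfl _) _
  · exact Dvd.dvd.mul_right (pow_dvd_pow _ (Nat.le_succ m)) _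

private lemma key_sum (x0 : ℝ) : ∀ (k m : ℕ) (g : Polynomial ℝ), k < m →
    (X - C x0) ^ m ∣ g →
    ∑ α ∈ g.support, g.coeff α * (α : ℝ) ^ k * x0 ^ α = 0 := by
  intro k
  induction k with
  | zero =>
    intro m g hm hdvd
    have hroot : g.IsRoot x0 := by
      have h1 : (X - C x0) ∣ g := (dvd_pow_self _ (by omega)).trans hdvd
      exact dvd_iff_isRoot.mp h1
    have : g.eval x0 = 0 := hroot
    rw [eval_eq_sum, Polynomial.sum] at this
    simpa using this
  | succ k ih =>
    intro m g hm hdvd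
    have hdvd' : (X - C x0) ^ (m - 1) ∣ X * derivative g := by
      apply dvd_X_mul_deriv
      rwa [Nat.sub_add_cancel (by omega)]
    have h1 := ih (m - 1) (X * derivative g) (by omega) hdvd'
    have hsub : (X * derivative g).support ⊆ g.support := by
      intro α hα
      rw [mem_support_iff] at hα ⊢
      intro h0
      apply hα
      rw [coeff_X_mul_deriv, h0, mul_zero]
    have e1 : ∑ α ∈ g.support, g.coeff α * (α : ℝ) ^ (k + 1) * x0 ^ α
        = ∑ α ∈ g.support, (X * derivative g).coeff α * (α : ℝ) ^ k * x0 ^ α := by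
      refine Finset.sum_congr rfl fun α _ => ?_
      rw [coeff_X_mul_deriv]
      ring
    have hvan : ∀ α ∈ g.support, α ∉ (X * derivative g).support →
        (X * derivative g).coeff α * (α : ℝ) ^ k * x0 ^ α = 0 := by
      intro α _ hα
      rw [notMem_support_iff] at hα
      rw [hα, zero_mul, zero_mul]
    rw [e1, ← Finset.sum_subset hsub hvan]
    exact h1

theorem stmt3 (f : Polynomial ℝ) (x0 : ℝ) (n : ℕ) (hn : 0 < n)
    (hzero : (Polynomial.X - Polynomial.C x0) ^ n ∣ f)
    (p : Polynomial ℝ) (hp : p.degree < n) :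
    ∑ α ∈ f.support, f.coeff α * p.eval (α : ℝ) * x0 ^ α = 0 := by
  have key : ∀ k ∈ p.support, ∑ α ∈ f.support, f.coeff α * (α : ℝ) ^ k * x0 ^ α = 0 := by
    intro k hk
    refine key_sum x0 k n f ?_ hzero
    have h1 : (k : WithBot ℕ) ≤ p.degree := le_degree_of_ne_zero (mem_support_iff.mp hk)
    have h2 : (k : WithBot ℕ) < (n : WithBot ℕ) := lt_of_le_of_lt h1 hp
    exact_mod_cast h2
  calc ∑ α ∈ f.support, f.coeff α * p.eval (α : ℝ) * x0 ^ α
      = ∑ α ∈ f.support, ∑ k ∈ p.support,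
          p.coeff k * (f.coeff α * (α : ℝ) ^ k * x0 ^ α) := by
        refine Finset.sum_congr rfl fun α _ => ?_
        rw [eval_eq_sum, Polynomial.sum, Finset.mul_sum, Finset.sum_mul]
        refine Finset.sum_congr rfl fun k _ => ?_
        ring
    _ = ∑ k ∈ p.support, p.coeff k *
          ∑ α ∈ f.support, f.coeff α * (α : ℝ) ^ k * x0 ^ α := by
        rw [Finset.sum_comm]
        simp [Finset.mul_sum]
    _ = 0 := Finset.sum_eq_zero fun k hk => by rw [key k hk, mul_zero]
end

section
/- Let $H, P$ be $N \times N$ Hermitian matrices with eigenvalues arranged in increasing order. Then for integers $1 \leq j, k \leq N$ with $j + k \geq N + 1$, $\lambda_{j+k-N}(H+P) \leq \lambda_j(H) + \lambda_k(P)$, and for $1 \leq j, k \leq N$ with $j + k \leq N + 1$, $\lambda_j(H) + \lambda_k(P) \leq \lambda_{j+k-1}(H+P)$. -/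
open scoped InnerProductSpace
open Submodule Finset

variable {N : ℕ}

local notation "E" => EuclideanSpace ℂ (Fin N)

lemma quadform (b : OrthonormalBasis (Fin N) ℂ (EuclideanSpace ℂ (Fin N)))
    (μ : Fin N → ℝ) (T : (EuclideanSpace ℂ (Fin N)) →ₗ[ℂ] (EuclideanSpace ℂ (Fin N)))
    (hT : ∀ i, T (b i) = (μ i : ℂ) • b i) (x : EuclideanSpace ℂ (Fin N)) :
    (inner ℂ x (T x) : ℂ).re = ∑ i, μ i * ‖b.repr x i‖ ^ 2 := by
  conv_lhs => rw [← b.sum_repr x]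
  rw [map_sum]
  simp_rw [map_smul, hT, smul_smul]
  rw [b.orthonormal.inner_sum]
  rw [Complex.re_sum]
  refine Finset.sum_congr rfl fun i _ => ?_
  rw [show (starRingEnd ℂ) (b.repr x i) * (b.repr x i * (μ i:ℂ))
      = (μ i : ℂ) * ((Complex.normSq (b.repr x i) : ℝ) : ℂ) by
    rw [Complex.normSq_eq_conj_mul_self]; push_cast; ring]
  simp [← Complex.ofReal_mul, Complex.normSq_eq_norm_sq,
    ← Complex.ofReal_pow]

lemma parseval (b : OrthonormalBasis (Fin N) ℂ (EuclideanSpace ℂ (Fin N)))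
    (x : EuclideanSpace ℂ (Fin N)) : ‖x‖ ^ 2 = ∑ i, ‖b.repr x i‖ ^ 2 := by
  rw [← b.repr.norm_map x, EuclideanSpace.norm_eq, Real.sq_sqrt (by positivity)]

lemma repr_zero (b : OrthonormalBasis (Fin N) ℂ (EuclideanSpace ℂ (Fin N)))
    (s : Finset (Fin N)) {x : EuclideanSpace ℂ (Fin N)}
    (hx : x ∈ span ℂ (⇑b '' ↑s)) {i : Fin N} (hi : i ∉ s) : b.repr x i = 0 := by
  rw [← b.coe_toBasis] at hx
  have := (Module.Basis.mem_span_image b.toBasis).mp hx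
  rw [← b.coe_toBasis_repr_apply]
  by_contra h
  exact hi (this (Finsupp.mem_support_iff.mpr h))

lemma span_finrank (b : OrthonormalBasis (Fin N) ℂ (EuclideanSpace ℂ (Fin N)))
    (s : Finset (Fin N)) : Module.finrank ℂ (span ℂ (⇑b '' ↑s)) = s.card := by
  have hli : LinearIndependent ℂ (fun i : s => b i) :=
    b.orthonormal.linearIndependent.comp _ Subtype.val_injective
  have : ⇑b '' ↑s = Set.range (fun i : s => b i) := by
    ext y; simp [Set.mem_image, Set.mem_range]
  rw [this, finrank_span_eq_card hli, Fintype.card_coe]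

lemma lower_bound (b : OrthonormalBasis (Fin N) ℂ (EuclideanSpace ℂ (Fin N)))
    (μ : Fin N → ℝ) (T : (EuclideanSpace ℂ (Fin N)) →ₗ[ℂ] (EuclideanSpace ℂ (Fin N)))
    (hT : ∀ i, T (b i) = (μ i : ℂ) • b i) (s : Finset (Fin N)) (c : ℝ)
    (hc : ∀ i ∈ s, c ≤ μ i) {x : EuclideanSpace ℂ (Fin N)}
    (hx : x ∈ span ℂ (⇑b '' ↑s)) :
    c * ‖x‖ ^ 2 ≤ (inner ℂ x (T x) : ℂ).re := by
  rw [quadform b μ T hT, parseval b, Finset.mul_sum]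
  refine Finset.sum_le_sum fun i _ => ?_
  by_cases hi : i ∈ s
  · exact mul_le_mul_of_nonneg_right (hc i hi) (by positivity)
  · rw [repr_zero b s hx hi]; simp

lemma upper_bound (b : OrthonormalBasis (Fin N) ℂ (EuclideanSpace ℂ (Fin N)))
    (μ : Fin N → ℝ) (T : (EuclideanSpace ℂ (Fin N)) →ₗ[ℂ] (EuclideanSpace ℂ (Fin N)))
    (hT : ∀ i, T (b i) = (μ i : ℂ) • b i) (s : Finset (Fin N)) (c : ℝ)
    (hc : ∀ i ∈ s, μ i ≤ c) {x : EuclideanSpace ℂ (Fin N)}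
    (hx : x ∈ span ℂ (⇑b '' ↑s)) :
    (inner ℂ x (T x) : ℂ).re ≤ c * ‖x‖ ^ 2 := by
  rw [quadform b μ T hT, parseval b, Finset.mul_sum]
  refine Finset.sum_le_sum fun i _ => ?_
  by_cases hi : i ∈ s
  · exact mul_le_mul_of_nonneg_right (hc i hi) (by positivity)
  · rw [repr_zero b s hx hi]; simp

lemma three_inter (U V W : Submodule ℂ (EuclideanSpace ℂ (Fin N)))
    (h : 2 * N + 1 ≤ Module.finrank ℂ U + Module.finrank ℂ V + Module.finrank ℂ W) :
    ∃ x : EuclideanSpace ℂ (Fin N), x ≠ 0 ∧ x ∈ U ∧ x ∈ V ∧ x ∈ W := by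
  have hE : Module.finrank ℂ (EuclideanSpace ℂ (Fin N)) = N := finrank_euclideanSpace_fin
  have h1 : Module.finrank ℂ U + Module.finrank ℂ V
      = Module.finrank ℂ ↥(U ⊔ V) + Module.finrank ℂ ↥(U ⊓ V) :=
    (Submodule.finrank_sup_add_finrank_inf_eq U V).symm
  have h2 : Module.finrank ℂ ↥(U ⊓ V) + Module.finrank ℂ W
      = Module.finrank ℂ ↥((U ⊓ V) ⊔ W) + Module.finrank ℂ ↥(U ⊓ V ⊓ W) :=
    (Submodule.finrank_sup_add_finrank_inf_eq (U ⊓ V) W).symm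
  have h3 := Submodule.finrank_le (U ⊔ V)
  have h4 := Submodule.finrank_le ((U ⊓ V) ⊔ W)
  rw [hE] at h3 h4
  have h5 : 0 < Module.finrank ℂ ↥(U ⊓ V ⊓ W) := by omega
  obtain ⟨⟨x, hx⟩, hx0⟩ := Module.finrank_pos_iff_exists_ne_zero.mp h5
  refine ⟨x, ?_, hx.1.1, hx.1.2, hx.2⟩
  simpa [Submodule.mk_eq_zero] using hx0

lemma weyl_main (bH bP bHP : OrthonormalBasis (Fin N) ℂ (EuclideanSpace ℂ (Fin N)))
    (μH μP μHP : Fin N → ℝ)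
    (TH TP : (EuclideanSpace ℂ (Fin N)) →ₗ[ℂ] (EuclideanSpace ℂ (Fin N)))
    (hTH : ∀ i, TH (bH i) = (μH i : ℂ) • bH i)
    (hTP : ∀ i, TP (bP i) = (μP i : ℂ) • bP i)
    (hTHP : ∀ i, (TH + TP) (bHP i) = (μHP i : ℂ) • bHP i)
    (hμH : Monotone μH) (hμP : Monotone μP) (hμHP : Monotone μHP)
    (tH tP tHP : Fin N)
    (hdim : 2 * N + 1 ≤ (N - (tH : ℕ)) + (N - (tP : ℕ)) + ((tHP : ℕ) + 1)) :
    μH tH + μP tP ≤ μHP tHP := by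
  obtain ⟨x, hx0, hxU, hxV, hxW⟩ := three_inter
    (span ℂ (⇑bH '' ↑(Ici tH))) (span ℂ (⇑bP '' ↑(Ici tP)))
    (span ℂ (⇑bHP '' ↑(Iic tHP)))
    (by rw [span_finrank, span_finrank, span_finrank, Fin.card_Ici, Fin.card_Ici,
      Fin.card_Iic]; omega)
  have h1 := lower_bound bH μH TH hTH (Ici tH) (μH tH)
    (fun i hi => hμH (Finset.mem_Ici.mp hi)) hxU
  have h2 := lower_bound bP μP TP hTP (Ici tP) (μP tP)
    (fun i hi => hμP (Finset.mem_Ici.mp hi)) hxV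
  have h3 := upper_bound bHP μHP (TH + TP) hTHP (Iic tHP) (μHP tHP)
    (fun i hi => hμHP (Finset.mem_Iic.mp hi)) hxW
  have hsplit : (inner ℂ x ((TH + TP) x) : ℂ).re
      = (inner ℂ x (TH x) : ℂ).re + (inner ℂ x (TP x) : ℂ).re := by
    rw [LinearMap.add_apply, inner_add_right, Complex.add_re]
  have hn : (0:ℝ) < ‖x‖ ^ 2 := by have := norm_pos_iff.mpr hx0; positivity
  have := (mul_le_mul_iff_of_pos_right hn).mp (by nlinarith : (μH tH + μP tP) * ‖x‖^2 ≤ μHP tHP * ‖x‖^2)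
  exact this

lemma weyl_main' (bH bP bHP : OrthonormalBasis (Fin N) ℂ (EuclideanSpace ℂ (Fin N)))
    (μH μP μHP : Fin N → ℝ)
    (TH TP : (EuclideanSpace ℂ (Fin N)) →ₗ[ℂ] (EuclideanSpace ℂ (Fin N)))
    (hTH : ∀ i, TH (bH i) = (μH i : ℂ) • bH i)
    (hTP : ∀ i, TP (bP i) = (μP i : ℂ) • bP i)
    (hTHP : ∀ i, (TH + TP) (bHP i) = (μHP i : ℂ) • bHP i)
    (hμH : Monotone μH) (hμP : Monotone μP) (hμHP : Monotone μHP)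
    (tH tP tHP : Fin N)
    (hdim : 2 * N + 1 ≤ ((tH : ℕ) + 1) + ((tP : ℕ) + 1) + (N - (tHP : ℕ))) :
    μHP tHP ≤ μH tH + μP tP := by
  obtain ⟨x, hx0, hxU, hxV, hxW⟩ := three_inter
    (span ℂ (⇑bH '' ↑(Iic tH))) (span ℂ (⇑bP '' ↑(Iic tP)))
    (span ℂ (⇑bHP '' ↑(Ici tHP)))
    (by rw [span_finrank, span_finrank, span_finrank, Fin.card_Iic, Fin.card_Iic,
      Fin.card_Ici]; omega)
  have h1 := upper_bound bH μH TH hTH (Iic tH) (μH tH)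
    (fun i hi => hμH (Finset.mem_Iic.mp hi)) hxU
  have h2 := upper_bound bP μP TP hTP (Iic tP) (μP tP)
    (fun i hi => hμP (Finset.mem_Iic.mp hi)) hxV
  have h3 := lower_bound bHP μHP (TH + TP) hTHP (Ici tHP) (μHP tHP)
    (fun i hi => hμHP (Finset.mem_Ici.mp hi)) hxW
  have hsplit : (inner ℂ x ((TH + TP) x) : ℂ).re
      = (inner ℂ x (TH x) : ℂ).re + (inner ℂ x (TP x) : ℂ).re := by
    rw [LinearMap.add_apply, inner_add_right, Complex.add_re]
  have hn : (0:ℝ) < ‖x‖ ^ 2 := by have := norm_pos_iff.mpr hx0; positivity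
  exact (mul_le_mul_iff_of_pos_right hn).mp (by nlinarith : μHP tHP * ‖x‖^2 ≤ (μH tH + μP tP) * ‖x‖^2)

lemma eig_rel (A : Matrix (Fin N) (Fin N) ℂ) (hA : A.IsHermitian) (σ : Equiv.Perm (Fin N)) (i : Fin N) :
    Matrix.toEuclideanLin A ((hA.eigenvectorBasis.reindex σ.symm) i)
      = ((hA.eigenvalues (σ i) : ℝ) : ℂ) • (hA.eigenvectorBasis.reindex σ.symm) i := by
  rw [OrthonormalBasis.reindex_apply, Equiv.symm_symm]
  have := hA.mulVec_eigenvectorBasis (σ i)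
  apply (WithLp.equiv 2 _).injective
  simp only [WithLp.equiv_apply, Matrix.piLp_ofLp_toEuclideanLin]
  simp only [WithLp.ofLp_smul]
  rw [Matrix.toLin'_apply, this]
  ext x
  simp [Complex.real_smul]

theorem stmt8 (N : ℕ) (H P : Matrix (Fin N) (Fin N) ℂ)
    (hH : H.IsHermitian) (hP : P.IsHermitian) (hHP : (H + P).IsHermitian)
    (μH μP μHP : Fin N → ℝ)
    (hμH : Monotone μH) (hμP : Monotone μP) (hμHP : Monotone μHP)
    (hpermH : ∃ σ : Equiv.Perm (Fin N), μH = hH.eigenvalues ∘ σ)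
    (hpermP : ∃ σ : Equiv.Perm (Fin N), μP = hP.eigenvalues ∘ σ)
    (hpermHP : ∃ σ : Equiv.Perm (Fin N), μHP = hHP.eigenvalues ∘ σ)
    (j k : ℕ) (hj1 : 1 ≤ j) (hjN : j ≤ N) (hk1 : 1 ≤ k) (hkN : k ≤ N) :
    (∀ _h : N + 1 ≤ j + k,
        μHP ⟨j + k - N - 1, by omega⟩ ≤ μH ⟨j - 1, by omega⟩ + μP ⟨k - 1, by omega⟩) ∧
    (∀ _h : j + k ≤ N + 1,
        μH ⟨j - 1, by omega⟩ + μP ⟨k - 1, by omega⟩ ≤ μHP ⟨j + k - 1 - 1, by omega⟩) := by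
  obtain ⟨σH, hσH⟩ := hpermH
  obtain ⟨σP, hσP⟩ := hpermP
  obtain ⟨σHP, hσHP⟩ := hpermHP
  set bH := hH.eigenvectorBasis.reindex σH.symm
  set bP := hP.eigenvectorBasis.reindex σP.symm
  set bHP := hHP.eigenvectorBasis.reindex σHP.symm
  set TH := Matrix.toEuclideanLin H
  set TP := Matrix.toEuclideanLin P
  have hTH : ∀ i, TH (bH i) = (μH i : ℂ) • bH i := fun i => by
    rw [hσH]; exact eig_rel H hH σH i
  have hTP : ∀ i, TP (bP i) = (μP i : ℂ) • bP i := fun i => by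
    rw [hσP]; exact eig_rel P hP σP i
  have hTHP : ∀ i, (TH + TP) (bHP i) = (μHP i : ℂ) • bHP i := fun i => by
    have : TH + TP = Matrix.toEuclideanLin (H + P) := (map_add _ H P).symm
    rw [this, hσHP]; exact eig_rel (H + P) hHP σHP i
  constructor
  · intro h
    exact weyl_main' bH bP bHP μH μP μHP TH TP hTH hTP hTHP hμH hμP hμHP
      ⟨j - 1, by omega⟩ ⟨k - 1, by omega⟩ ⟨j + k - N - 1, by omega⟩
      (by show 2*N+1 ≤ ((j-1)+1) + ((k-1)+1) + (N - (j+k-N-1)); omega)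
  · intro h
    exact weyl_main bH bP bHP μH μP μHP TH TP hTH hTP hTHP hμH hμP hμHP
      ⟨j - 1, by omega⟩ ⟨k - 1, by omega⟩ ⟨j + k - 1 - 1, by omega⟩
      (by show 2*N+1 ≤ (N - (j-1)) + (N - (k-1)) + ((j+k-1-1)+1); omega)
end
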